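/- For every integer N ≥ 8 there exist a positive integer r and an irredundant mixed orthogonal array IrMOA(r, 1+N, 3¹2^N, 2), i.e. an IrMOA of strength 2 with one column of 3 levels and N columns of 2 levels. -/

import Mathlib

open Finset

/-- The Hamming distance between two rows of an array: the number of columns
in which the rows differ. -/
def hamDist {ι κ : Type*} [Fintype κ] (A : ι → κ → ℕ) (i i' : ι) : ℕ :=
  (Finset.univ.filter fun j => A i j ≠ A i' j).card

/-- `MD(A)`: the minimum Hamming distance over all pairs of distinct rows. -/
noncomputable def minDist {ι κ : Type*} [Fintype κ] (A : ι → κ → ℕ) : ℕ :=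
  sInf {n | ∃ i i', i ≠ i' ∧ hamDist A i i' = n}

/-- `A` is a mixed orthogonal array of strength `k` (rows indexed by `ι`,
columns by `κ`, column `j` taking values in `{0, …, lv j − 1}`): in the
subarray given by any choice of at most `k` columns, every tuple of symbols
occurs equally often as a row, namely (number of rows)/(product of the levels
of the chosen columns) times. -/
def IsMOA {ι κ : Type*} [Fintype ι] [Fintype κ] [DecidableEq κ]
    (A : ι → κ → ℕ) (lv : κ → ℕ) (k : ℕ) : Prop :=
  (∀ i j, A i j < lv j) ∧
  ∀ S : Finset κ, S.card ≤ k → ∀ x : κ → ℕ, (∀ j ∈ S, x j < lv j) →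
    (Finset.univ.filter fun i : ι => ∀ j ∈ S, A i j = x j).card * ∏ j ∈ S, lv j
      = Fintype.card ι

/-- An irredundant mixed orthogonal array of strength `k`: an MOA of strength
`k` any two distinct rows of which have Hamming distance at least `k+1`. -/
def IsIrMOA {ι κ : Type*} [Fintype ι] [Fintype κ] [DecidableEq κ]
    (A : ι → κ → ℕ) (lv : κ → ℕ) (k : ℕ) : Prop :=
  IsMOA A lv k ∧ ∀ i i' : ι, i ≠ i' → k + 1 ≤ hamDist A i i'

/-- A difference scheme `D(r, c, d)`: an `r × c` matrix over `ℤ_d` such that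
for any two distinct columns the `r` differences of corresponding entries
take each value of `ℤ_d` exactly `r/d` times. -/
def IsDiffScheme {r c d : ℕ} (B : Fin r → Fin c → ZMod d) : Prop :=
  ∀ j j' : Fin c, j ≠ j' → ∀ g : ZMod d,
    (Finset.univ.filter fun i : Fin r => B i j - B i j' = g).card * d = r

open Sum

namespace S6

abbrev Vt (m : ℕ) := Fin 3 ⊕ Fin m

def ep (m j : ℕ) : Vt m × Vt m :=
  if h : j < 3 * m then
    (Sum.inl ⟨j / m, (Nat.div_lt_iff_lt_mul (by omega)).2 (by omega)⟩,
     Sum.inr ⟨j % m, Nat.mod_lt _ (by omega)⟩)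
  else if j = 3 * m then (Sum.inl 0, Sum.inl 1) else (Sum.inl 1, Sum.inl 2)

def col (m j : ℕ) : Vt m → ZMod 2 := fun v =>
  (if v = (ep m j).1 then 1 else 0) + (if v = (ep m j).2 then 1 else 0)

def Hmap (m N : ℕ) : (Fin N → ZMod 2) →+ (Vt m → ZMod 2) where
  toFun w := fun v => ∑ j : Fin N, w j * col m j.val v
  map_zero' := by funext v; simp
  map_add' w w' := by funext v; simp [add_mul, Finset.sum_add_distrib]

def dvec (N e : ℕ) : Fin N → ZMod 2 := fun t => if t.val = e then 1 else 0

lemma Hdvec (m : ℕ) {N e : ℕ} (he : e < N) : Hmap m N (dvec N e) = col m e := by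
  funext v
  show (∑ j : Fin N, (if j.val = e then (1 : ZMod 2) else 0) * col m j.val v) = _
  rw [Finset.sum_eq_single ⟨e, he⟩]
  · simp
  · intro j _ hj
    have : j.val ≠ e := fun h => hj (Fin.ext h)
    simp [this]
  · simp

lemma sp_lt {m a i : ℕ} (ha : a < 3) (hi : i < m) : a * m + i < 3 * m := by
  calc a * m + i < a * m + m := by omega
  _ = (a + 1) * m := by ring
  _ ≤ 3 * m := Nat.mul_le_mul_right _ (by omega)

lemma sp_div {m a i : ℕ} (hi : i < m) : (a * m + i) / m = a ∧ (a * m + i) % m = i := by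
  constructor
  · rw [add_comm, Nat.add_mul_div_right _ _ (by omega : 0 < m), Nat.div_eq_of_lt hi, zero_add]
  · rw [add_comm, Nat.add_mul_mod_self_right, Nat.mod_eq_of_lt hi]

lemma sp_inj {m a b i i' : ℕ} (hi : i < m) (hi' : i' < m) (h : a * m + i = b * m + i') :
    a = b ∧ i = i' := by
  have h1 := (sp_div (a := a) hi).1
  have h2 := (sp_div (a := b) hi').1
  rw [h] at h1
  have hab : a = b := by rw [← h1, h2]
  subst hab
  exact ⟨rfl, by omega⟩

lemma sp_ne {m a b i i' : ℕ} (hi : i < m) (hi' : i' < m) (h : a ≠ b ∨ i ≠ i') :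
    a * m + i ≠ b * m + i' := by
  intro hh
  obtain ⟨h1, h2⟩ := sp_inj hi hi' hh
  tauto

lemma ep_sp {m a i p : ℕ} (ha : a < 3) (hi : i < m) (hp : p = a * m + i) :
    ep m p = (Sum.inl ⟨a, ha⟩, Sum.inr ⟨i, hi⟩) := by
  subst hp
  rw [ep, dif_pos (sp_lt ha hi)]
  simp only [Prod.mk.injEq, Sum.inl.injEq, Sum.inr.injEq, Fin.mk.injEq]
  exact ⟨(sp_div hi).1, (sp_div hi).2⟩

lemma ep_hub01 (m : ℕ) : ep m (3 * m) = (Sum.inl 0, Sum.inl 1) := by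
  rw [ep, dif_neg (by omega), if_pos rfl]

lemma ep_hub12 (m : ℕ) : ep m (3 * m + 1) = (Sum.inl 1, Sum.inl 2) := by
  rw [ep, dif_neg (by omega), if_neg (by omega)]

lemma ep_ne (m j : ℕ) : (ep m j).1 ≠ (ep m j).2 := by
  rw [ep]; split_ifs <;> simp

lemma ep_fst_inl (m j : ℕ) : ∃ t, (ep m j).1 = Sum.inl t := by
  rw [ep]; split_ifs <;> exact ⟨_, rfl⟩

lemma col_self (m j : ℕ) : col m j ((ep m j).1) = 1 := by
  rw [col, if_pos rfl, if_neg (ep_ne m j), add_zero]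

lemma decode {m N p : ℕ} (hm : 0 < m) (hp : p < N) (h2 : N < 3 * m + 3) :
    (∃ a i, a < 3 ∧ i < m ∧ p = a * m + i) ∨ p = 3 * m ∨ p = 3 * m + 1 := by
  by_cases h : p < 3 * m
  · left
    refine ⟨p / m, p % m, (Nat.div_lt_iff_lt_mul hm).2 (by omega), Nat.mod_lt _ hm, ?_⟩
    rw [Nat.mul_comm]
    exact (Nat.div_add_mod p m).symm
  · right; omega


lemma zmod2_ne_zero {z : ZMod 2} (h : z ≠ 0) : z = 1 := by revert h; revert z; decide

lemma col_spoke_inr {m a i p : ℕ} (ha : a < 3) (hi : i < m) (hp : p = a * m + i) :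
    col m p (Sum.inr ⟨i, hi⟩) = 1 := by
  rw [col, ep_sp ha hi hp]
  simp

lemma col_spoke_inr_ne {m a i i' p : ℕ} (ha : a < 3) (hi : i < m) (hp : p = a * m + i)
    (hi' : i' < m) (hne : i' ≠ i) : col m p (Sum.inr ⟨i', hi'⟩) = 0 := by
  rw [col, ep_sp ha hi hp]
  simp [hne]

lemma col_spoke_inl {m a i p : ℕ} (ha : a < 3) (hi : i < m) (hp : p = a * m + i) :
    col m p (Sum.inl ⟨a, ha⟩) = 1 := by
  rw [col, ep_sp ha hi hp]
  simp

lemma col_spoke_inl_ne {m a a' i p : ℕ} (ha : a < 3) (hi : i < m) (hp : p = a * m + i)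
    (ha' : a' < 3) (hne : a' ≠ a) : col m p (Sum.inl ⟨a', ha'⟩) = 0 := by
  rw [col, ep_sp ha hi hp]
  simp [hne]

lemma col_hub01_inr {m : ℕ} (x : Fin m) : col m (3 * m) (Sum.inr x) = 0 := by
  rw [col, ep_hub01]; simp

lemma col_hub12_inr {m : ℕ} (x : Fin m) : col m (3 * m + 1) (Sum.inr x) = 0 := by
  rw [col, ep_hub12]; simp

lemma col_hub01_inl0 {m : ℕ} : col m (3 * m) (Sum.inl 0) = 1 := by
  rw [col, ep_hub01]; simp

lemma col_hub12_inl0 {m : ℕ} : col m (3 * m + 1) (Sum.inl 0) = 0 := by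
  rw [col, ep_hub12]; simp

lemma col_inj {m N p q : ℕ} (hm : 2 ≤ m) (h2 : N < 3 * m + 3)
    (hp : p < N) (hq : q < N) (h : col m p = col m q) : p = q := by
  have hm0 : 0 < m := by omega
  rcases decode hm0 hp h2 with ⟨a, i, ha, hi, hpe⟩ | hpe | hpe <;>
    rcases decode hm0 hq h2 with ⟨b, i', hb, hi', hqe⟩ | hqe | hqe
  · -- spoke / spoke
    have e1 := congrFun h (Sum.inr ⟨i, hi⟩)
    rw [col_spoke_inr ha hi hpe] at e1
    by_cases hii : i = i'
    · subst hii
      have e2 := congrFun h (Sum.inl ⟨a, ha⟩)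
      rw [col_spoke_inl ha hi hpe] at e2
      by_cases hab : a = b
      · rw [hpe, hqe, hab]
      · rw [col_spoke_inl_ne hb hi' hqe ha hab] at e2
        exact absurd e2 one_ne_zero
    · rw [col_spoke_inr_ne hb hi' hqe hi hii] at e1
      exact absurd e1 one_ne_zero
  · have e1 := congrFun h (Sum.inr ⟨i, hi⟩)
    rw [col_spoke_inr ha hi hpe, hqe, col_hub01_inr] at e1
    exact absurd e1 one_ne_zero
  · have e1 := congrFun h (Sum.inr ⟨i, hi⟩)
    rw [col_spoke_inr ha hi hpe, hqe, col_hub12_inr] at e1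
    exact absurd e1 one_ne_zero
  · have e1 := congrFun h (Sum.inr ⟨i', hi'⟩)
    rw [col_spoke_inr hb hi' hqe, hpe, col_hub01_inr] at e1
    exact absurd e1.symm one_ne_zero
  · rw [hpe, hqe]
  · have e1 := congrFun h (Sum.inl 0)
    rw [hpe, hqe, col_hub01_inl0, col_hub12_inl0] at e1
    exact absurd e1 one_ne_zero
  · have e1 := congrFun h (Sum.inr ⟨i', hi'⟩)
    rw [col_spoke_inr hb hi' hqe, hpe, col_hub12_inr] at e1
    exact absurd e1.symm one_ne_zero
  · have e1 := congrFun h (Sum.inl 0)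
    rw [hpe, hqe, col_hub01_inl0, col_hub12_inl0] at e1
    exact absurd e1.symm one_ne_zero
  · rw [hpe, hqe]

lemma quad_leaf {m N : ℕ} (h1 : 3 * m ≤ N) {a b i i'' : ℕ}
    (ha : a < 3) (hb : b < 3) (hab : a ≠ b) (hi : i < m) (hi'' : i'' < m) (hii : i ≠ i'')
    (j j' : Fin N) (hj : j.val = a * m + i)
    (hj'1 : j'.val ≠ a * m + i) (hj'2 : j'.val ≠ b * m + i)
    (hj'3 : j'.val ≠ b * m + i'') (hj'4 : j'.val ≠ a * m + i'') :
    ∃ v : Fin N → ZMod 2, Hmap m N v = 0 ∧ v j = 1 ∧ v j' = 0 := by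
  have n1 : a * m + i ≠ b * m + i := sp_ne hi hi (Or.inl hab)
  have n2 : a * m + i ≠ b * m + i'' := sp_ne hi hi'' (Or.inl hab)
  have n3 : a * m + i ≠ a * m + i'' := sp_ne hi hi'' (Or.inr hii)
  refine ⟨dvec N (a * m + i) + dvec N (b * m + i) + dvec N (b * m + i'') + dvec N (a * m + i''),
    ?_, ?_, ?_⟩
  · rw [map_add, map_add, map_add, Hdvec m (lt_of_lt_of_le (sp_lt ha hi) h1),
      Hdvec m (lt_of_lt_of_le (sp_lt hb hi) h1), Hdvec m (lt_of_lt_of_le (sp_lt hb hi'') h1),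
      Hdvec m (lt_of_lt_of_le (sp_lt ha hi'') h1)]
    funext v
    have key : ∀ A B C D : ZMod 2, A + B + (C + B) + (C + D) + (A + D) = 0 := by decide
    show col m (a * m + i) v + col m (b * m + i) v + col m (b * m + i'') v
        + col m (a * m + i'') v = 0
    rw [col, col, col, col, ep_sp ha hi rfl, ep_sp hb hi rfl, ep_sp hb hi'' rfl,
      ep_sp ha hi'' rfl]
    exact key _ _ _ _
  · simp [dvec, Pi.add_apply, hj, n1, n2, n3, hab, hii, (show m ≠ 0 by omega)]
  · simp [dvec, Pi.add_apply, hj'1, hj'2, hj'3, hj'4]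

lemma tri01_leaf {m N : ℕ} (hm : 2 ≤ m) (hN : 3 * m < N) {i : ℕ} (hi : i < m)
    (j j' : Fin N) (hj : j.val = 3 * m ∨ j.val = i ∨ j.val = m + i)
    (hj'1 : j'.val ≠ 3 * m) (hj'2 : j'.val ≠ i) (hj'3 : j'.val ≠ m + i) :
    ∃ v : Fin N → ZMod 2, Hmap m N v = 0 ∧ v j = 1 ∧ v j' = 0 := by
  have hiN : i < N := by omega
  have hmiN : m + i < N := by omega
  have n1 : (3 : ℕ) * m ≠ i := by omega
  have n2 : (3 : ℕ) * m ≠ m + i := by omega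
  have n3 : i ≠ m + i := by omega
  refine ⟨dvec N (3 * m) + dvec N i + dvec N (m + i), ?_, ?_, ?_⟩
  · rw [map_add, map_add, Hdvec m hN, Hdvec m hiN, Hdvec m hmiN]
    funext v
    have key : ∀ A B C : ZMod 2, A + B + (A + C) + (B + C) = 0 := by decide
    show col m (3 * m) v + col m i v + col m (m + i) v = 0
    rw [col, col, col, ep_hub01, ep_sp (show (0:ℕ) < 3 by omega) hi (by omega),
      ep_sp (show (1:ℕ) < 3 by omega) hi (by omega)]
    exact key _ _ _
  · rcases hj with hj | hj | hj <;>
      simp [dvec, Pi.add_apply, hj, n1, n2, n3, n1.symm, n2.symm, n3.symm, (show m ≠ 0 by omega)]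
  · simp [dvec, Pi.add_apply, hj'1, hj'2, hj'3]

lemma tri12_leaf {m N : ℕ} (hm : 2 ≤ m) (hN : 3 * m + 1 < N) {i : ℕ} (hi : i < m)
    (j j' : Fin N) (hj : j.val = 3 * m + 1 ∨ j.val = m + i ∨ j.val = 2 * m + i)
    (hj'1 : j'.val ≠ 3 * m + 1) (hj'2 : j'.val ≠ m + i) (hj'3 : j'.val ≠ 2 * m + i) :
    ∃ v : Fin N → ZMod 2, Hmap m N v = 0 ∧ v j = 1 ∧ v j' = 0 := by
  have hiN : m + i < N := by omega
  have hmiN : 2 * m + i < N := by omega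
  have n1 : 3 * m + 1 ≠ m + i := by omega
  have n2 : 3 * m + 1 ≠ 2 * m + i := by omega
  have n3 : m + i ≠ 2 * m + i := by omega
  refine ⟨dvec N (3 * m + 1) + dvec N (m + i) + dvec N (2 * m + i), ?_, ?_, ?_⟩
  · rw [map_add, map_add, Hdvec m hN, Hdvec m hiN, Hdvec m hmiN]
    funext v
    have key : ∀ A B C : ZMod 2, A + B + (A + C) + (B + C) = 0 := by decide
    show col m (3 * m + 1) v + col m (m + i) v + col m (2 * m + i) v = 0
    rw [col, col, col, ep_hub12, ep_sp (show (1:ℕ) < 3 by omega) hi (by omega),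
      ep_sp (show (2:ℕ) < 3 by omega) hi (by omega)]
    exact key _ _ _
  · rcases hj with hj | hj | hj <;>
      simp [dvec, Pi.add_apply, hj, n1, n2, n3, n1.symm, n2.symm, n3.symm,
        (show m ≠ 0 by omega), (show m ≠ 2 * m by omega), (show 2 * m ≠ m by omega)]
  · simp [dvec, Pi.add_apply, hj'1, hj'2, hj'3]

lemma exists_codeword {m N : ℕ} (hm : 2 ≤ m) (h1 : 3 * m ≤ N) (h2 : N < 3 * m + 3)
    (hm3 : 3 ≤ m ∨ 3 * m + 2 ≤ N) (j j' : Fin N) (hjj : j ≠ j') :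
    ∃ v : Fin N → ZMod 2, Hmap m N v = 0 ∧ v j = 1 ∧ v j' = 0 := by
  have hm0 : 0 < m := by omega
  have hvne : j.val ≠ j'.val := fun h => hjj (Fin.ext h)
  rcases decode hm0 j.isLt h2 with ⟨a, i, ha, hi, hp⟩ | hp | hp
  · -- j is a spoke (a, i)
    rcases decode hm0 j'.isLt h2 with ⟨a₂, i₂, ha₂, hi₂, hq⟩ | hq | hq
    · by_cases haa : a₂ = a
      · subst haa
        have hii₂ : i ≠ i₂ := by
          intro h; exact hvne (by rw [hp, hq, h])
        by_cases hm3' : 3 ≤ m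
        · -- pick i'' ∉ {i, i₂} and b ≠ a₂
          set i'' := if i ≠ 0 ∧ i₂ ≠ 0 then 0 else if i ≠ 1 ∧ i₂ ≠ 1 then 1 else 2 with hi''def
          have hi''f : i'' < m ∧ i'' ≠ i ∧ i'' ≠ i₂ := by
            rw [hi''def]; split_ifs <;> omega
          set b := if a₂ = 0 then 1 else 0 with hbdef
          have hbf : b < 3 ∧ a₂ ≠ b := by rw [hbdef]; split_ifs <;> omega
          exact quad_leaf h1 ha hbf.1 hbf.2 hi hi''f.1 (Ne.symm hi''f.2.1) j j' hp
            (hq ▸ sp_ne hi₂ hi (Or.inr (Ne.symm hii₂)))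
            (hq ▸ sp_ne hi₂ hi (Or.inl hbf.2))
            (hq ▸ sp_ne hi₂ hi''f.1 (Or.inl hbf.2))
            (hq ▸ sp_ne hi₂ hi''f.1 (Or.inr (Ne.symm hi''f.2.2)))
        · have hm2 : m = 2 := by omega
          have hNbig : 3 * m + 2 ≤ N := by rcases hm3 with h | h <;> omega
          interval_cases a₂
          · exact tri01_leaf hm (by omega) hi j j' (Or.inr (Or.inl (by omega)))
              (by rw [hq]; omega) (by rw [hq]; omega) (by rw [hq]; omega)
          · exact tri01_leaf hm (by omega) hi j j' (Or.inr (Or.inr (by omega)))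
              (by rw [hq]; omega) (by rw [hq]; omega) (by rw [hq]; omega)
          · exact tri12_leaf hm (by omega) hi j j' (Or.inr (Or.inr (by omega)))
              (by rw [hq]; omega) (by rw [hq]; omega) (by rw [hq]; omega)
      · -- different hubs: third hub b, any i'' ≠ i
        set b := if a ≠ 0 ∧ a₂ ≠ 0 then 0 else if a ≠ 1 ∧ a₂ ≠ 1 then 1 else 2 with hbdef
        have hbf : b < 3 ∧ b ≠ a ∧ b ≠ a₂ := by rw [hbdef]; split_ifs <;> omega
        set i'' := if i = 0 then 1 else 0 with hi''def
        have hi''f : i'' < m ∧ i ≠ i'' := by rw [hi''def]; split_ifs <;> omega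
        exact quad_leaf h1 ha hbf.1 (Ne.symm hbf.2.1) hi hi''f.1 hi''f.2 j j' hp
          (hq ▸ sp_ne hi₂ hi (Or.inl haa))
          (hq ▸ sp_ne hi₂ hi (Or.inl (fun h => hbf.2.2 h.symm)))
          (hq ▸ sp_ne hi₂ hi''f.1 (Or.inl (fun h => hbf.2.2 h.symm)))
          (hq ▸ sp_ne hi₂ hi''f.1 (Or.inl haa))
    all_goals {
      -- j' is a hub edge, use a quad avoiding all hub edges
      set b := if a = 0 then 1 else 0 with hbdef
      have hbf : b < 3 ∧ a ≠ b := by rw [hbdef]; split_ifs <;> omega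
      set i'' := if i = 0 then 1 else 0 with hi''def
      have hi''f : i'' < m ∧ i ≠ i'' := by rw [hi''def]; split_ifs <;> omega
      have s1 := sp_lt ha hi
      have s2 := sp_lt hbf.1 hi
      have s3 := sp_lt hbf.1 hi''f.1
      have s4 := sp_lt ha hi''f.1
      exact quad_leaf h1 ha hbf.1 hbf.2 hi hi''f.1 hi''f.2 j j' hp
        (by omega) (by omega) (by omega) (by omega) }
  · -- j = hub01
    have hNbig : 3 * m < N := hp ▸ j.isLt
    rcases decode hm0 j'.isLt h2 with ⟨a₂, i₂, ha₂, hi₂, hq⟩ | hq | hq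
    · set i := if i₂ = 0 then 1 else 0 with hidef
      have hif : i < m ∧ i₂ ≠ i := by rw [hidef]; split_ifs <;> omega
      have s1 := sp_lt ha₂ hi₂
      have e1 := sp_ne (a := a₂) (b := 0) hi₂ hif.1 (Or.inr hif.2)
      have e2 := sp_ne (a := a₂) (b := 1) hi₂ hif.1 (Or.inr hif.2)
      exact tri01_leaf hm hNbig hif.1 j j' (Or.inl hp)
        (by omega) (by rw [hq]; omega) (by rw [hq]; omega)
    · exact absurd (hp.trans hq.symm) hvne
    · exact tri01_leaf hm hNbig (show 0 < m by omega) j j' (Or.inl hp)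
        (by omega) (by omega) (by omega)
  · -- j = hub12
    have hNbig : 3 * m + 1 < N := hp ▸ j.isLt
    rcases decode hm0 j'.isLt h2 with ⟨a₂, i₂, ha₂, hi₂, hq⟩ | hq | hq
    · set i := if i₂ = 0 then 1 else 0 with hidef
      have hif : i < m ∧ i₂ ≠ i := by rw [hidef]; split_ifs <;> omega
      have s1 := sp_lt ha₂ hi₂
      have e1 := sp_ne (a := a₂) (b := 1) hi₂ hif.1 (Or.inr hif.2)
      have e2 := sp_ne (a := a₂) (b := 2) hi₂ hif.1 (Or.inr hif.2)
      exact tri12_leaf hm hNbig hif.1 j j' (Or.inl hp)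
        (by omega) (by rw [hq]; omega) (by rw [hq]; omega)
    · exact tri12_leaf hm hNbig (show 0 < m by omega) j j' (Or.inl hp)
        (by omega) (by omega) (by omega)
    · exact absurd (hp.trans hq.symm) hvne

lemma count_fiber {G M : Type*} [AddGroup G] [Fintype G] [DecidableEq G]
    [AddGroup M] [Fintype M] [DecidableEq M] (φ : G →+ M) (hφ : Function.Surjective φ)
    (y : M) : (univ.filter fun g => φ g = y).card * Fintype.card M = Fintype.card G := by
  have key : ∀ z : M, (univ.filter fun g => φ g = z).card
      = (univ.filter fun g => φ g = 0).card := by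
    intro z
    obtain ⟨g0, hg0⟩ := hφ z
    apply Finset.card_nbij' (fun g => g - g0) (fun g => g + g0)
    · intro g hg
      simp only [Finset.mem_coe, Finset.mem_filter, Finset.mem_univ, true_and] at hg ⊢
      rw [map_sub, hg, hg0, sub_self]
    · intro g hg
      simp only [Finset.mem_coe, Finset.mem_filter, Finset.mem_univ, true_and] at hg ⊢
      rw [map_add, hg, hg0, zero_add]
    · intro g _; simp
    · intro g _; simp
  have total : ∑ z : M, (univ.filter fun g => φ g = z).card = Fintype.card G := by
    rw [← Finset.card_univ (α := G),
      Finset.card_eq_sum_card_fiberwise (f := φ) (fun x _ => mem_univ _)]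
  rw [key y]
  calc (univ.filter fun g => φ g = 0).card * Fintype.card M
      = ∑ _z : M, (univ.filter fun g => φ g = 0).card := by
        rw [Finset.sum_const, Finset.card_univ, smul_eq_mul, mul_comm]
    _ = ∑ z : M, (univ.filter fun g => φ g = z).card := by
        exact Finset.sum_congr rfl fun z _ => (key z).symm
    _ = Fintype.card G := total

def Code (m N : ℕ) : AddSubgroup (Fin N → ZMod 2) := (Hmap m N).ker

instance (m N : ℕ) : DecidablePred (· ∈ Code m N) :=
  fun w => decidable_of_iff (Hmap m N w = 0) AddMonoidHom.mem_ker.symm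

lemma zmod2_neg (x : ZMod 2) : -x = x := by revert x; decide

lemma negz {N : ℕ} (x : Fin N → ZMod 2) : -x = x := funext fun t => zmod2_neg _

/-- evaluation at coordinates j, j' as a hom on the code -/
def proj2 (m N : ℕ) (j j' : Fin N) : Code m N →+ ZMod 2 × ZMod 2 where
  toFun v := (v.1 j, v.1 j')
  map_zero' := rfl
  map_add' _ _ := rfl

def proj1 (m N : ℕ) (j : Fin N) : Code m N →+ ZMod 2 where
  toFun v := v.1 j
  map_zero' := rfl
  map_add' _ _ := rfl

lemma zmod_cast_val {n : ℕ} [NeZero n] (z : ZMod n) : ((z.val : ℕ) : ZMod n) = z :=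
  ZMod.natCast_rightInverse z

lemma proj1_surj {m N : ℕ} (hm : 2 ≤ m) (h1 : 3 * m ≤ N) (h2 : N < 3 * m + 3)
    (hm3 : 3 ≤ m ∨ 3 * m + 2 ≤ N) (hN2 : 2 ≤ N) (j : Fin N) :
    Function.Surjective (proj1 m N j) := by
  intro y
  have hj' : (if j.val = 0 then 1 else 0) < N := by split_ifs <;> omega
  set j' : Fin N := ⟨if j.val = 0 then 1 else 0, hj'⟩ with hj'def
  have hjj : j ≠ j' := by
    intro h
    have := congrArg Fin.val h
    rw [hj'def] at this
    simp only at this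
    split_ifs at this <;> omega
  obtain ⟨v, hv0, hv1, _⟩ := exists_codeword hm h1 h2 hm3 j j' hjj
  refine ⟨y.val • ⟨v, AddMonoidHom.mem_ker.mpr hv0⟩, ?_⟩
  rw [map_nsmul]
  show y.val • (v j) = y
  rw [hv1, nsmul_eq_mul, mul_one, zmod_cast_val]

lemma proj2_surj {m N : ℕ} (hm : 2 ≤ m) (h1 : 3 * m ≤ N) (h2 : N < 3 * m + 3)
    (hm3 : 3 ≤ m ∨ 3 * m + 2 ≤ N) (j j' : Fin N) (hjj : j ≠ j') :
    Function.Surjective (proj2 m N j j') := by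
  rintro ⟨y, y'⟩
  obtain ⟨v, hv0, hv1, hv2⟩ := exists_codeword hm h1 h2 hm3 j j' hjj
  obtain ⟨w, hw0, hw1, hw2⟩ := exists_codeword hm h1 h2 hm3 j' j hjj.symm
  refine ⟨y.val • ⟨v, AddMonoidHom.mem_ker.mpr hv0⟩
    + y'.val • ⟨w, AddMonoidHom.mem_ker.mpr hw0⟩, ?_⟩
  rw [map_add, map_nsmul, map_nsmul]
  show y.val • (v j, v j') + y'.val • (w j, w j') = (y, y')
  rw [hv1, hv2, hw1, hw2, Prod.ext_iff]
  constructor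
  · show y.val • (1 : ZMod 2) + y'.val • (0 : ZMod 2) = y
    rw [smul_zero, add_zero, nsmul_eq_mul, mul_one, zmod_cast_val]
  · show y.val • (0 : ZMod 2) + y'.val • (1 : ZMod 2) = y'
    rw [smul_zero, zero_add, nsmul_eq_mul, mul_one, zmod_cast_val]

lemma single_count {m N : ℕ} (hm : 2 ≤ m) (h1 : 3 * m ≤ N) (h2 : N < 3 * m + 3)
    (hm3 : 3 ≤ m ∨ 3 * m + 2 ≤ N) (hN2 : 2 ≤ N) (j : Fin N) (y : ZMod 2) :
    (univ.filter fun v : Code m N => v.1 j = y).card * 2 = Fintype.card (Code m N) := by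
  have := count_fiber (proj1 m N j) (proj1_surj hm h1 h2 hm3 hN2 j) y
  exact this

lemma pair_count {m N : ℕ} (hm : 2 ≤ m) (h1 : 3 * m ≤ N) (h2 : N < 3 * m + 3)
    (hm3 : 3 ≤ m ∨ 3 * m + 2 ≤ N) (j j' : Fin N) (hjj : j ≠ j') (y y' : ZMod 2) :
    (univ.filter fun v : Code m N => v.1 j = y ∧ v.1 j' = y').card * 4
      = Fintype.card (Code m N) := by
  have := count_fiber (proj2 m N j j') (proj2_surj hm h1 h2 hm3 j j' hjj) (y, y')
  have hc : Fintype.card (ZMod 2 × ZMod 2) = 4 := by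
    rw [Fintype.card_prod, ZMod.card]
  rw [hc] at this
  simpa [proj2, Prod.mk.injEq] using this

def wv1 (N : ℕ) : Fin N → ZMod 2 := dvec N 0 + dvec N 1

def wv2 (m N : ℕ) : Fin N → ZMod 2 := dvec N 1 + dvec N m + dvec N (2 * m)

def ww (m N : ℕ) : ZMod 3 → Fin N → ZMod 2 := fun a =>
  if a = 1 then wv1 N else if a = 2 then wv2 m N else 0

lemma ww0 (m N : ℕ) : ww m N 0 = 0 := by
  rw [ww, if_neg (by decide), if_neg (by decide)]

lemma ww1 (m N : ℕ) : ww m N 1 = wv1 N := by rw [ww, if_pos rfl]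

lemma ww2 (m N : ℕ) : ww m N 2 = wv2 m N := by
  rw [ww, if_neg (by decide), if_pos rfl]

lemma Hw1 {m N : ℕ} (hm : 2 ≤ m) (h1 : 3 * m ≤ N) :
    Hmap m N (wv1 N) = col m 0 + col m 1 := by
  rw [wv1, map_add, Hdvec m (by omega), Hdvec m (by omega)]

lemma Hw2 {m N : ℕ} (hm : 2 ≤ m) (h1 : 3 * m ≤ N) :
    Hmap m N (wv2 m N) = col m 1 + col m m + col m (2 * m) := by
  rw [wv2, map_add, map_add, Hdvec m (by omega), Hdvec m (by omega), Hdvec m (by omega)]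

lemma sig1_inl {m N : ℕ} (hm : 2 ≤ m) (h1 : 3 * m ≤ N) (t : Fin 3) :
    Hmap m N (wv1 N) (Sum.inl t) = 0 := by
  rw [Hw1 hm h1, Pi.add_apply, col, col,
    ep_sp (show (0:ℕ) < 3 by omega) (show 0 < m by omega) (by omega),
    ep_sp (show (0:ℕ) < 3 by omega) (show 1 < m by omega) (by omega)]
  simp only [Sum.inl.injEq, reduceCtorEq, if_false]
  split_ifs <;> decide

lemma sig1_pt {m N : ℕ} (hm : 2 ≤ m) (h1 : 3 * m ≤ N) :
    Hmap m N (wv1 N) (Sum.inr ⟨0, by omega⟩) = 1 := by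
  rw [Hw1 hm h1, Pi.add_apply, col, col,
    ep_sp (show (0:ℕ) < 3 by omega) (show 0 < m by omega) (by omega),
    ep_sp (show (0:ℕ) < 3 by omega) (show 1 < m by omega) (by omega)]
  simp

lemma sig2_inl {m N : ℕ} (hm : 2 ≤ m) (h1 : 3 * m ≤ N) (t : Fin 3) :
    Hmap m N (wv2 m N) (Sum.inl t) = 1 := by
  rw [Hw2 hm h1, Pi.add_apply, Pi.add_apply, col, col, col,
    ep_sp (show (0:ℕ) < 3 by omega) (show 1 < m by omega) (by omega),
    ep_sp (show (1:ℕ) < 3 by omega) (show 0 < m by omega) (by omega),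
    ep_sp (show (2:ℕ) < 3 by omega) (show 0 < m by omega) (by omega)]
  simp only [Sum.inl.injEq, reduceCtorEq, if_false, add_zero]
  fin_cases t <;> simp

lemma ne_col_of_zero_inl {m : ℕ} (f : Vt m → ZMod 2) (hf : ∀ t, f (Sum.inl t) = 0)
    (p : ℕ) : f ≠ col m p := by
  intro h
  obtain ⟨t, ht⟩ := ep_fst_inl m p
  have h1 := col_self m p
  rw [← h, ht, hf t] at h1
  exact zero_ne_one h1

lemma ne_col_of_one_inl {m N p : ℕ} (hm : 0 < m) (hp : p < N) (h2 : N < 3 * m + 3)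
    (f : Vt m → ZMod 2) (hf : ∀ t, f (Sum.inl t) = 1) : f ≠ col m p := by
  intro h
  rcases decode hm hp h2 with ⟨a, i, ha, hi, hpe⟩ | hpe | hpe
  · set b : ℕ := if a = 0 then 1 else 0 with hbdef
    have hb : b < 3 ∧ b ≠ a := by rw [hbdef]; split_ifs <;> omega
    have hcol := col_spoke_inl_ne ha hi hpe hb.1 hb.2
    rw [← h, hf] at hcol
    exact one_ne_zero hcol
  · have hcol : col m p (Sum.inl 2) = 0 := by rw [hpe, col, ep_hub01]; simp
    rw [← h, hf] at hcol
    exact one_ne_zero hcol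
  · have hcol : col m p (Sum.inl 0) = 0 := by rw [hpe]; exact col_hub12_inl0
    rw [← h, hf] at hcol
    exact one_ne_zero hcol

lemma sigma_facts {m N : ℕ} (hm : 2 ≤ m) (h1 : 3 * m ≤ N) (h2 : N < 3 * m + 3)
    {a a' : ZMod 3} (haa : a ≠ a') :
    Hmap m N (ww m N a - ww m N a') ≠ 0 ∧
      ∀ p : Fin N, Hmap m N (ww m N a - ww m N a') ≠ col m p.val := by
  have hm0 : 0 < m := by omega
  have T1 : Hmap m N (wv1 N) ≠ 0 ∧ ∀ p : Fin N, Hmap m N (wv1 N) ≠ col m p.val := by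
    constructor
    · intro h
      have := sig1_pt hm h1
      rw [h] at this
      simp at this
    · exact fun p => ne_col_of_zero_inl _ (sig1_inl hm h1) p.val
  have T2 : Hmap m N (wv2 m N) ≠ 0 ∧ ∀ p : Fin N, Hmap m N (wv2 m N) ≠ col m p.val := by
    constructor
    · intro h
      have := sig2_inl hm h1 0
      rw [h] at this
      simp at this
    · exact fun p => ne_col_of_one_inl hm0 p.isLt h2 _ (sig2_inl hm h1)
  have T3 : Hmap m N (wv1 N - wv2 m N) ≠ 0 ∧
      ∀ p : Fin N, Hmap m N (wv1 N - wv2 m N) ≠ col m p.val := by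
    have hval : ∀ t, Hmap m N (wv1 N - wv2 m N) (Sum.inl t) = 1 := by
      intro t
      rw [map_sub, Pi.sub_apply, sig1_inl hm h1, sig2_inl hm h1]
      exact (by decide : (0 : ZMod 2) - 1 = 1)
    constructor
    · intro h
      have := hval 0
      rw [h] at this
      simp at this
    · exact fun p => ne_col_of_one_inl hm0 p.isLt h2 _ hval
  have tri : ∀ z : ZMod 3, z = 0 ∨ z = 1 ∨ z = 2 := by decide
  rcases tri a with h | h | h <;> rcases tri a' with h' | h' | h' <;> subst h <;> subst h' <;>
    first
    | exact absurd rfl haa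
    | (rw [ww0, ww1, zero_sub, negz]; exact T1)
    | (rw [ww0, ww1, sub_zero]; exact T1)
    | (rw [ww0, ww2, zero_sub, negz]; exact T2)
    | (rw [ww0, ww2, sub_zero]; exact T2)
    | (rw [ww1, ww2]; exact T3)
    | (rw [ww1, ww2, ← neg_sub (wv1 N) (wv2 m N), negz]; exact T3)

lemma support_card_one {N : ℕ} {u : Fin N → ZMod 2} {j : Fin N}
    (h : univ.filter (fun t => u t ≠ 0) = {j}) : u = dvec N j.val := by
  funext t
  by_cases ht : t = j
  · subst ht
    have hmem : t ∈ univ.filter (fun t => u t ≠ 0) := by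
      rw [h]; exact mem_singleton_self t
    have := (mem_filter.1 hmem).2
    rw [zmod2_ne_zero this, dvec]
    simp
  · have hz : u t = 0 := by
      by_contra hne
      have hmem : t ∈ univ.filter (fun t => u t ≠ 0) := mem_filter.2 ⟨mem_univ t, hne⟩
      rw [h] at hmem
      exact ht (mem_singleton.1 hmem)
    have hv : t.val ≠ j.val := fun hh => ht (Fin.ext hh)
    rw [hz, dvec]
    simp [hv]

lemma support_card_two {N : ℕ} {u : Fin N → ZMod 2} {j j' : Fin N} (hjj : j ≠ j')
    (h : univ.filter (fun t => u t ≠ 0) = {j, j'}) :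
    u = dvec N j.val + dvec N j'.val := by
  have hvv : j.val ≠ j'.val := fun hh => hjj (Fin.ext hh)
  funext t
  by_cases ht : t = j
  · subst ht
    have hmem : t ∈ univ.filter (fun t => u t ≠ 0) := by
      rw [h]; exact mem_insert_self _ _
    have := (mem_filter.1 hmem).2
    rw [zmod2_ne_zero this, Pi.add_apply, dvec, dvec]
    simp [hvv]
  · by_cases ht' : t = j'
    · subst ht'
      have hmem : t ∈ univ.filter (fun t => u t ≠ 0) := by
        rw [h]; exact mem_insert_of_mem (mem_singleton_self t)
      have := (mem_filter.1 hmem).2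
      rw [zmod2_ne_zero this, Pi.add_apply, dvec, dvec]
      simp [hvv.symm]
    · have hz : u t = 0 := by
        by_contra hne
        have hmem : t ∈ univ.filter (fun t => u t ≠ 0) := mem_filter.2 ⟨mem_univ t, hne⟩
        rw [h] at hmem
        rcases mem_insert.1 hmem with hh | hh
        · exact ht hh
        · exact ht' (mem_singleton.1 hh)
      have hv : t.val ≠ j.val := fun hh => ht (Fin.ext hh)
      have hv' : t.val ≠ j'.val := fun hh => ht' (Fin.ext hh)
      rw [hz, Pi.add_apply, dvec, dvec]
      simp [hv, hv']

lemma prod_count {α β : Type*} [Fintype α] [Fintype β] [DecidableEq α] [DecidableEq β]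
    (P : α × β → Prop) [DecidablePred P] :
    (univ.filter P).card = ∑ a : α, (univ.filter fun b => P (a, b)).card := by
  rw [Finset.card_eq_sum_card_fiberwise (f := Prod.fst) (t := univ) (fun x _ => mem_univ _)]
  refine Finset.sum_congr rfl fun a _ => ?_
  apply Finset.card_nbij' (fun x => x.2) (fun b => (a, b))
  · intro x hx
    simp only [Finset.mem_coe, mem_filter, mem_univ, true_and] at hx ⊢
    rcases hx with ⟨hP, hfst⟩
    rw [← hfst, Prod.mk.eta]
    exact hP
  · intro b hb
    simp only [Finset.mem_coe, mem_filter, mem_univ, true_and] at hb ⊢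
    exact ⟨hb, by simp⟩
  · intro x hx
    simp only [Finset.mem_coe, mem_filter, mem_univ, true_and] at hx
    exact Prod.ext hx.2.symm rfl
  · intro b _
    rfl

lemma val_eq_iff {n : ℕ} [NeZero n] (z : ZMod n) (x : ℕ) (hx : x < n) :
    z.val = x ↔ z = (x : ZMod n) :=
  ⟨fun h => by rw [← h, zmod_cast_val], fun h => by rw [h, ZMod.val_cast_of_lt hx]⟩

end S6

open S6

/-- For every `N ≥ 8` there exist `r > 0` and an irredundant
mixed orthogonal array `IrMOA(r, 1+N, 3¹2^N, 2)`: one column of 3 levels and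
`N` columns of 2 levels, of strength 2. -/
theorem statement6 (N : ℕ) (hN : 8 ≤ N) :
    ∃ (r : ℕ) (C : Fin r → (Unit ⊕ Fin N) → ℕ),
      0 < r ∧ IsIrMOA C (Sum.elim (fun _ => 3) fun _ => 2) 2 := by
  set m := N / 3 with hmdef
  have hm : 2 ≤ m := by omega
  have h1 : 3 * m ≤ N := by omega
  have h2 : N < 3 * m + 3 := by omega
  have hm3 : 3 ≤ m ∨ 3 * m + 2 ≤ N := by omega
  have hN2 : 2 ≤ N := by omega
  set Arr : ZMod 3 × Code m N → (Unit ⊕ Fin N) → ℕ := fun p =>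
    Sum.elim (fun _ => p.1.val)
      (fun j => ((p.2 : Fin N → ZMod 2) j + ww m N p.1 j).val) with hArrdef
  set r : ℕ := Fintype.card (ZMod 3 × Code m N) with hrdef
  set e : Fin r ≃ ZMod 3 × Code m N := (Fintype.equivFin _).symm with hedef
  -- the distance estimate, at the level of pairs
  have dist : ∀ p p' : ZMod 3 × Code m N, p ≠ p' →
      3 ≤ (univ.filter fun c => Arr p c ≠ Arr p' c).card := by
    rintro ⟨a, v⟩ ⟨a', v'⟩ hpp
    by_cases haa : a = a'
    · subst haa
      have hvv : v ≠ v' := fun h => hpp (by rw [h])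
      have hu0 : Hmap m N (v.1 - v'.1) = 0 := by
        rw [map_sub, AddMonoidHom.mem_ker.1 v.2, AddMonoidHom.mem_ker.1 v'.2, sub_zero]
      have hune : v.1 - v'.1 ≠ 0 := sub_ne_zero.2 (fun h => hvv (Subtype.ext h))
      set su := univ.filter (fun t : Fin N => (v.1 - v'.1) t ≠ 0) with hsudef
      have hsu3 : 3 ≤ su.card := by
        by_contra hlt
        obtain hc | hc | hc : su.card = 0 ∨ su.card = 1 ∨ su.card = 2 := by omega
        · rw [Finset.card_eq_zero, hsudef, Finset.filter_eq_empty_iff] at hc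
          exact hune (funext fun t => by
            have := hc (mem_univ t); simpa using this)
        · obtain ⟨j, hj⟩ := Finset.card_eq_one.1 hc
          have hu : v.1 - v'.1 = dvec N j.val := support_card_one (hsudef ▸ hj)
          have hcol : col m j.val = 0 := by
            rw [← Hdvec m j.isLt, ← hu, hu0]
          have hone := col_self m j.val
          rw [hcol] at hone
          simp at hone
        · obtain ⟨j, j', hne, hjj'⟩ := Finset.card_eq_two.1 hc
          have hu : v.1 - v'.1 = dvec N j.val + dvec N j'.val :=
            support_card_two hne (hsudef ▸ hjj')
          have hcol : col m j.val + col m j'.val = 0 := by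
            rw [← Hdvec m j.isLt, ← Hdvec m j'.isLt, ← map_add, ← hu, hu0]
          have hkey : ∀ x y : ZMod 2, x + y = 0 → x = y := by decide
          have heq : col m j.val = col m j'.val :=
            funext fun vv => hkey _ _ (congrFun hcol vv)
          exact hne (Fin.ext (col_inj hm h2 j.isLt j'.isLt heq))
      refine le_trans hsu3 ?_
      have hsub : su.image Sum.inr ⊆
          univ.filter (fun c => Arr (a, v) c ≠ Arr (a, v') c) := by
        intro c hc
        obtain ⟨jj, hjj, rfl⟩ := Finset.mem_image.1 hc
        refine mem_filter.2 ⟨mem_univ _, ?_⟩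
        rw [hsudef] at hjj
        have huj : (v.1 - v'.1) jj ≠ 0 := (mem_filter.1 hjj).2
        show ((v.1 jj + ww m N a jj).val ≠ (v'.1 jj + ww m N a jj).val)
        intro hval
        have hh := ZMod.val_injective 2 hval
        have hvj : v.1 jj = v'.1 jj := add_right_cancel hh
        exact huj (by simp [Pi.sub_apply, hvj])
      calc su.card = (su.image Sum.inr).card :=
            (Finset.card_image_of_injective _ Sum.inr_injective).symm
        _ ≤ _ := Finset.card_le_card hsub
    · -- distinct ternary symbols
      set u : Fin N → ZMod 2 := (v.1 - v'.1) + (ww m N a - ww m N a') with hudef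
      have hu : Hmap m N u = Hmap m N (ww m N a - ww m N a') := by
        rw [hudef, map_add, map_sub, AddMonoidHom.mem_ker.1 v.2,
          AddMonoidHom.mem_ker.1 v'.2, sub_zero, zero_add]
      obtain ⟨hnz, hncol⟩ := sigma_facts hm h1 h2 haa
      set su := univ.filter (fun t : Fin N => u t ≠ 0) with hsudef
      have hsu2 : 2 ≤ su.card := by
        by_contra hlt
        obtain hc | hc : su.card = 0 ∨ su.card = 1 := by omega
        · rw [Finset.card_eq_zero, hsudef, Finset.filter_eq_empty_iff] at hc
          have : u = 0 := funext fun t => by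
            have := hc (mem_univ t); simpa using this
          rw [this, map_zero] at hu
          exact hnz hu.symm
        · obtain ⟨j, hj⟩ := Finset.card_eq_one.1 hc
          have huv : u = dvec N j.val := support_card_one (hsudef ▸ hj)
          rw [huv, Hdvec m j.isLt] at hu
          exact hncol j hu.symm
      have hsub : insert (Sum.inl ()) (su.image Sum.inr) ⊆
          univ.filter (fun c => Arr (a, v) c ≠ Arr (a', v') c) := by
        intro c hc
        rcases Finset.mem_insert.1 hc with hc | hc
        · subst hc
          refine mem_filter.2 ⟨mem_univ _, ?_⟩
          show a.val ≠ a'.val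
          intro h
          exact haa (ZMod.val_injective 3 h)
        · obtain ⟨jj, hjj, rfl⟩ := Finset.mem_image.1 hc
          refine mem_filter.2 ⟨mem_univ _, ?_⟩
          rw [hsudef] at hjj
          have huj : u jj ≠ 0 := (mem_filter.1 hjj).2
          show ((v.1 jj + ww m N a jj).val ≠ (v'.1 jj + ww m N a' jj).val)
          intro hval
          have hh := ZMod.val_injective 2 hval
          refine huj ?_
          rw [hudef]
          simp only [Pi.add_apply, Pi.sub_apply]
          rw [sub_add_sub_comm, hh, sub_self]
      have hcard : (insert (Sum.inl ()) (su.image (Sum.inr : Fin N → Unit ⊕ Fin N))).card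
          = su.card + 1 := by
        rw [Finset.card_insert_of_notMem (by simp),
          Finset.card_image_of_injective _ Sum.inr_injective]
      calc (3 : ℕ) ≤ su.card + 1 := by omega
        _ = _ := hcard.symm
        _ ≤ _ := Finset.card_le_card hsub
  refine ⟨r, fun t => Arr (e t), Fintype.card_pos_iff.2 ⟨(0, 0)⟩, ⟨⟨?_, ?_⟩, ?_⟩⟩
  · -- bounds
    intro i c
    rcases c with u | j
    · exact ZMod.val_lt ((e i).1)
    · exact ZMod.val_lt ((e i).2.1 j + ww m N (e i).1 j)
  · -- the orthogonal array counting property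
    intro S hS x hx
    have hcardtr : (univ.filter fun i : Fin r => ∀ c ∈ S, Arr (e i) c = x c).card
        = (univ.filter fun p : ZMod 3 × Code m N => ∀ c ∈ S, Arr p c = x c).card :=
      Finset.card_equiv e (fun i => by simp)
    rw [Fintype.card_fin]
    rw [show (univ.filter fun i : Fin r => ∀ c ∈ S, Arr (e i) c = x c).card
        * ∏ c ∈ S, Sum.elim (fun _ => 3) (fun _ => 2) c = _ from rfl, hcardtr, hrdef]
    obtain hc | hc | hc : S.card = 0 ∨ S.card = 1 ∨ S.card = 2 := by omega
    · rw [Finset.card_eq_zero.1 hc]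
      simp
    · obtain ⟨c, hSc⟩ := Finset.card_eq_one.1 hc
      subst hSc
      rcases c with u | j
      · -- single ternary column
        cases u
        have hx3 : x (Sum.inl ()) < 3 := hx _ (mem_singleton_self _)
        rw [prod_count]
        have hinner : ∀ a : ZMod 3,
            (univ.filter fun v : Code m N =>
              ∀ c ∈ ({Sum.inl ()} : Finset (Unit ⊕ Fin N)), Arr (a, v) c = x c).card
            = if a = ((x (Sum.inl ()) : ℕ) : ZMod 3) then Fintype.card (Code m N) else 0 := by
          intro a
          split_ifs with ha
          · rw [← Finset.card_univ]
            congr 1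
            apply Finset.filter_true_of_mem
            intro v _
            intro c hcm
            rw [mem_singleton.1 hcm]
            show a.val = x (Sum.inl ())
            rw [ha, ZMod.val_cast_of_lt hx3]
          · rw [Finset.card_eq_zero, Finset.filter_eq_empty_iff]
            intro v _ hall
            have := hall _ (mem_singleton_self (Sum.inl ()))
            exact ha ((val_eq_iff a _ hx3).1 this)
        rw [Finset.sum_congr rfl (fun a _ => hinner a), Finset.sum_ite_eq' univ _
          (fun _ => Fintype.card (Code m N))]
        rw [if_pos (mem_univ _), Finset.prod_singleton]
        show Fintype.card (Code m N) * 3 = Fintype.card (ZMod 3 × Code m N)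
        rw [Fintype.card_prod, ZMod.card]
        ring
      · -- single binary column
        have hx2 : x (Sum.inr j) < 2 := hx _ (mem_singleton_self _)
        rw [prod_count]
        have hinner : ∀ a : ZMod 3,
            (univ.filter fun v : Code m N =>
              ∀ c ∈ ({Sum.inr j} : Finset (Unit ⊕ Fin N)), Arr (a, v) c = x c).card * 2
            = Fintype.card (Code m N) := by
          intro a
          rw [show (univ.filter fun v : Code m N =>
              ∀ c ∈ ({Sum.inr j} : Finset (Unit ⊕ Fin N)), Arr (a, v) c = x c)
            = univ.filter (fun v : Code m N =>
              v.1 j = ((x (Sum.inr j) : ℕ) : ZMod 2) - ww m N a j) from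
            Finset.filter_congr (fun v _ => by
              simp only [Finset.mem_singleton, forall_eq]
              show (v.1 j + ww m N a j).val = x (Sum.inr j) ↔ _
              rw [val_eq_iff _ _ hx2, eq_sub_iff_add_eq])]
          exact single_count hm h1 h2 hm3 hN2 j _
        rw [Finset.prod_singleton]
        show (∑ a : ZMod 3, _) * 2 = _
        rw [Finset.sum_mul, Finset.sum_congr rfl (fun a _ => hinner a),
          Finset.sum_const, Finset.card_univ, ZMod.card, smul_eq_mul,
          Fintype.card_prod, ZMod.card]
    · obtain ⟨c, d, hcd, hS2⟩ := Finset.card_eq_two.1 hc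
      have mixed : ∀ (j : Fin N), S = ({Sum.inl (), Sum.inr j} : Finset (Unit ⊕ Fin N)) →
          (univ.filter fun p : ZMod 3 × Code m N => ∀ c ∈ S, Arr p c = x c).card
            * ∏ c ∈ S, Sum.elim (fun _ => 3) (fun _ => 2) c
          = Fintype.card (ZMod 3 × Code m N) := by
        intro j hS'
        subst hS'
        have hx3 : x (Sum.inl ()) < 3 := hx _ (mem_insert_self _ _)
        have hx2 : x (Sum.inr j) < 2 := hx _ (mem_insert_of_mem (mem_singleton_self _))
        have hne : (Sum.inl () : Unit ⊕ Fin N) ≠ Sum.inr j := by simp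
        rw [prod_count]
        set a0 : ZMod 3 := ((x (Sum.inl ()) : ℕ) : ZMod 3) with ha0def
        set K := (univ.filter (fun v : Code m N =>
          v.1 j = ((x (Sum.inr j) : ℕ) : ZMod 2) - ww m N a0 j)).card with hKdef
        have hinner : ∀ a : ZMod 3,
            (univ.filter fun v : Code m N =>
              ∀ c ∈ ({Sum.inl (), Sum.inr j} : Finset (Unit ⊕ Fin N)),
                Arr (a, v) c = x c).card
            = if a = a0 then K else 0 := by
          intro a
          split_ifs with ha
          · rw [hKdef]
            congr 1
            apply Finset.filter_congr
            intro v _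
            simp only [Finset.mem_insert, Finset.mem_singleton, forall_eq_or_imp, forall_eq]
            constructor
            · rintro ⟨-, hbin⟩
              have hthis : (v.1 j + ww m N a j).val = x (Sum.inr j) := hbin
              rw [val_eq_iff _ _ hx2] at hthis
              rw [← ha]
              exact eq_sub_iff_add_eq.2 hthis
            · intro hv
              constructor
              · show a.val = x (Sum.inl ())
                rw [ha]
                exact ZMod.val_cast_of_lt hx3
              · show (v.1 j + ww m N a j).val = x (Sum.inr j)
                rw [val_eq_iff _ _ hx2, ha]
                exact eq_sub_iff_add_eq.1 hv
          · rw [Finset.card_eq_zero, Finset.filter_eq_empty_iff]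
            intro v _ hall
            have := hall _ (mem_insert_self (Sum.inl ()) _)
            exact ha ((val_eq_iff a _ hx3).1 this)
        rw [Finset.sum_congr rfl (fun a _ => hinner a),
          Finset.sum_ite_eq' univ a0 (fun _ => K), if_pos (mem_univ _),
          Finset.prod_pair hne]
        have hK : K * 2 = Fintype.card (Code m N) :=
          single_count hm h1 h2 hm3 hN2 j _
        show K * (3 * 2) = Fintype.card (ZMod 3 × Code m N)
        rw [Fintype.card_prod, ZMod.card]
        omega
      rcases c with u | j <;> rcases d with u' | j'
      · cases u; cases u'; exact absurd rfl hcd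
      · cases u; exact mixed j' hS2
      · cases u'
        rw [Finset.pair_comm] at hS2
        exact mixed j hS2
      · -- two binary columns
        subst hS2
        have hjj : j ≠ j' := fun h => hcd (by rw [h])
        have hne : (Sum.inr j : Unit ⊕ Fin N) ≠ Sum.inr j' := by simp [hjj]
        have hx2 : x (Sum.inr j) < 2 := hx _ (mem_insert_self _ _)
        have hx2' : x (Sum.inr j') < 2 := hx _ (mem_insert_of_mem (mem_singleton_self _))
        rw [prod_count]
        have hinner : ∀ a : ZMod 3,
            (univ.filter fun v : Code m N =>
              ∀ c ∈ ({Sum.inr j, Sum.inr j'} : Finset (Unit ⊕ Fin N)),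
                Arr (a, v) c = x c).card * 4
            = Fintype.card (Code m N) := by
          intro a
          rw [show (univ.filter fun v : Code m N =>
              ∀ c ∈ ({Sum.inr j, Sum.inr j'} : Finset (Unit ⊕ Fin N)), Arr (a, v) c = x c)
            = univ.filter (fun v : Code m N =>
              v.1 j = ((x (Sum.inr j) : ℕ) : ZMod 2) - ww m N a j ∧
              v.1 j' = ((x (Sum.inr j') : ℕ) : ZMod 2) - ww m N a j') from
            Finset.filter_congr (fun v _ => by
              simp only [Finset.mem_insert, Finset.mem_singleton, forall_eq_or_imp, forall_eq]
              constructor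
              · rintro ⟨hb1, hb2⟩
                have hh1 : (v.1 j + ww m N a j).val = x (Sum.inr j) := hb1
                have hh2 : (v.1 j' + ww m N a j').val = x (Sum.inr j') := hb2
                rw [val_eq_iff _ _ hx2] at hh1
                rw [val_eq_iff _ _ hx2'] at hh2
                exact ⟨eq_sub_iff_add_eq.2 hh1, eq_sub_iff_add_eq.2 hh2⟩
              · rintro ⟨hb1, hb2⟩
                constructor
                · show (v.1 j + ww m N a j).val = x (Sum.inr j)
                  rw [val_eq_iff _ _ hx2]
                  exact eq_sub_iff_add_eq.1 hb1
                · show (v.1 j' + ww m N a j').val = x (Sum.inr j')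
                  rw [val_eq_iff _ _ hx2']
                  exact eq_sub_iff_add_eq.1 hb2)]
          exact pair_count hm h1 h2 hm3 j j' hjj _ _
        rw [Finset.prod_pair hne]
        show (∑ a : ZMod 3, _) * (2 * 2) = _
        rw [show ((2 : ℕ) * 2) = 4 from rfl, Finset.sum_mul,
          Finset.sum_congr rfl (fun a _ => hinner a),
          Finset.sum_const, Finset.card_univ, ZMod.card, smul_eq_mul,
          Fintype.card_prod, ZMod.card]
  · -- minimum distance
    intro t t' htt
    have hpp : e t ≠ e t' := fun h => htt (e.injective h)
    exact dist (e t) (e t') hpp
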